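/- Subsumption transfers through views: for every propagator p over Val', every view φ, and every domain d over Val, p is subsumed by φ(d) (i.e., p(d'') = d'' for every domain d'' over Val' with d'' ⊆ φ(d) pointwise) if and only if φ̂(p) is subsumed by d (i.e., φ̂(p)(d') = d' for every domain d' over Val with d' ⊆ d pointwise). -/

import Mathlib

namespace Stmt9

variable {Var Val Val' : Type*}

/-- A view applied to a domain (pointwise image). -/
def img (φ : Var → Val → Val') (d : Var → Set Val) : Var → Set Val' := fun x => φ x '' d x

/-- The inverse of a view applied to a domain (pointwise preimage). -/
def pre (φ : Var → Val → Val') (d : Var → Set Val') : Var → Set Val := fun x => φ x ⁻¹' d x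

/-- The derived propagator `φ̂(p) = φ⁻ ∘ p ∘ φ`. -/
def derived (φ : Var → Val → Val') (p : (Var → Set Val') → Var → Set Val')
    (d : Var → Set Val) : Var → Set Val := pre φ (p (img φ d))

/-- Subsumption transfers through views: `p` is subsumed by `φ(d)` if and only if `φ̂(p)` is
subsumed by `d`. -/
theorem subsumption_iff (φ : Var → Val → Val')
    (hφ : ∀ x, Function.Injective (φ x))
    (p : (Var → Set Val') → Var → Set Val')
    (hcontr : ∀ d x, p d x ⊆ d x)
    (hmono : ∀ d' d : Var → Set Val', (∀ x, d' x ⊆ d x) → ∀ x, p d' x ⊆ p d x)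
    (d : Var → Set Val) :
    (∀ d'' : Var → Set Val', (∀ x, d'' x ⊆ img φ d x) → p d'' = d'') ↔
    (∀ d' : Var → Set Val, (∀ x, d' x ⊆ d x) → derived φ p d' = d') := by
  constructor
  · intro h d' hd'
    have hsub : ∀ x, img φ d' x ⊆ img φ d x := fun x =>
      Set.image_mono (hd' x)
    have := h (img φ d') hsub
    funext x
    simp only [derived, pre, this, img, Set.preimage_image_eq _ (hφ x)]
  · intro h d'' hd''
    set d' : Var → Set Val := pre φ d'' with hd'
    have hsub : ∀ x, d' x ⊆ d x := by
      intro x v hv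
      obtain ⟨u, hu, he⟩ := hd'' x hv
      rwa [← hφ x he]
    have himg : img φ d' = d'' := by
      funext x
      have : d'' x ⊆ Set.range (φ x) := fun v hv =>
        ⟨(hd'' x hv).choose, (hd'' x hv).choose_spec.2⟩
      simp [img, hd', pre, Set.image_preimage_eq_inter_range,
        Set.inter_eq_left.mpr this]
    have hder := h d' hsub
    funext x
    apply Set.Subset.antisymm (hcontr _ _)
    intro v hv
    obtain ⟨u, hu, he⟩ := hd'' x hv
    have hu' : u ∈ d' x := by
      simp [hd', pre]; rw [he]; exact hv
    have : u ∈ derived φ p d' x := by rw [hder]; exact hu'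
    simp only [derived, pre, himg, Set.mem_preimage] at this
    rwa [he] at this
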